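/- Let v be a real-valued random variable with values in [vmin, vmax] where 0 ≤ vmin < vmax, and let c ≥ 0. There exists a cdf G supported in [vmin, vmax] such that the net utility U_net(G) = E[Ĝ(v)] − Ĝ(E[v]) is strictly greater than c if and only if c < E[max(0, v − E[v])]. -/

import Mathlib

open MeasureTheory Set

/-- A cdf supported in `[vmin, vmax]`: a nondecreasing right-continuous function
`G : ℝ → [0,1]` with `G r = 0` for `r < vmin` and `G r = 1` for `r ≥ vmax`. -/
def IsCdfOn (vmin vmax : ℝ) (G : ℝ → ℝ) : Prop :=
  Monotone G ∧ (∀ r, G r ∈ Icc (0 : ℝ) 1) ∧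
    (∀ r, ContinuousWithinAt G (Ici r) r) ∧
    (∀ r, r < vmin → G r = 0) ∧ (∀ r, vmax ≤ r → G r = 1)

/-- `Ĝ(x) := ∫_0^x G(r) dr`. -/
noncomputable def Ghat (G : ℝ → ℝ) (x : ℝ) : ℝ := ∫ r in (0 : ℝ)..x, G r

lemma Ghat_sub_eq (G : ℝ → ℝ) (hG : Monotone G) (m x : ℝ) :
    Ghat G x - Ghat G m = ∫ r in m..x, G r := by
  have h := intervalIntegral.integral_add_adjacent_intervals
    (hG.intervalIntegrable (μ := MeasureTheory.volume) (a := 0) (b := m))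
    (hG.intervalIntegrable (μ := MeasureTheory.volume) (a := m) (b := x))
  simp only [Ghat]
  linarith

lemma key_bound (G : ℝ → ℝ) (hG : Monotone G) (hG01 : ∀ r, G r ∈ Icc (0:ℝ) 1)
    (m x : ℝ) : Ghat G x - Ghat G m ≤ max 0 (x - m) := by
  rw [Ghat_sub_eq G hG m x]
  rcases le_or_gt m x with h | h
  · have h1 : ∫ r in m..x, G r ≤ ∫ r in m..x, (1:ℝ) := by
      apply intervalIntegral.integral_mono_on h (hG.intervalIntegrable)
        intervalIntegrable_const
      intro r _; exact (hG01 r).2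
    simp only [intervalIntegral.integral_const, smul_eq_mul, mul_one] at h1
    calc ∫ r in m..x, G r ≤ x - m := h1
      _ ≤ max 0 (x - m) := le_max_right _ _
  · rw [intervalIntegral.integral_symm]
    have h1 : (0:ℝ) ≤ ∫ r in x..m, G r :=
      intervalIntegral.integral_nonneg h.le (fun r _ => (hG01 r).1)
    have := le_max_left (0:ℝ) (x - m)
    linarith

lemma Ghat_mono (G : ℝ → ℝ) (hG : Monotone G) (hG01 : ∀ r, G r ∈ Icc (0:ℝ) 1) :
    Monotone (Ghat G) := by
  intro a b hab
  have : Ghat G b - Ghat G a = ∫ r in a..b, G r := Ghat_sub_eq G hG a b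
  have h1 : (0:ℝ) ≤ ∫ r in a..b, G r :=
    intervalIntegral.integral_nonneg hab (fun r _ => (hG01 r).1)
  linarith

/-- The step cdf `G = 1_{[m,∞)}` has `Ĝ(x) = max 0 (x - m)` for `0 ≤ x`, `0 ≤ m`. -/
lemma Ghat_step (m : ℝ) (hm : 0 ≤ m) (x : ℝ) (hx : 0 ≤ x) :
    Ghat (fun r => if m ≤ r then (1:ℝ) else 0) x = max 0 (x - m) := by
  set G : ℝ → ℝ := fun r => if m ≤ r then (1:ℝ) else 0 with hGdef
  have hGmono : Monotone G := by
    intro a b hab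
    simp only [hGdef]
    split_ifs with h1 h2 <;> norm_num
    exact absurd (h1.trans hab) h2
  have hzero : ∀ y, 0 ≤ y → y ≤ m → Ghat G y = 0 := by
    intro y hy0 hym
    have : ∀ᵐ r : ℝ, r ∈ Set.uIoc (0:ℝ) y → G r = 0 := by
      have hne : ∀ᵐ r : ℝ, r ≠ m := by
        rw [ae_iff]
        have : {a : ℝ | ¬a ≠ m} = {m} := by ext a; simp
        rw [this]; simp
      filter_upwards [hne] with r hr hmem
      rw [uIoc_of_le hy0] at hmem
      have : r < m := lt_of_le_of_ne (hmem.2.trans hym) hr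
      simp [hGdef, not_le.mpr this]
    exact intervalIntegral.integral_zero_ae this
  rcases le_or_gt x m with h | h
  · rw [hzero x hx h, max_eq_left (by linarith)]
  · have hsub := Ghat_sub_eq G hGmono m x
    rw [hzero m hm le_rfl] at hsub
    have h2 : ∫ r in m..x, G r = x - m := by
      have : ∫ r in m..x, G r = ∫ r in m..x, (1:ℝ) := by
        apply intervalIntegral.integral_congr
        intro r hr
        rw [uIcc_of_le h.le] at hr
        simp [hGdef, hr.1]
      rw [this]; simp
    rw [max_eq_right (by linarith)]
    linarith

/-- There exists a cdf `G` supported in `[vmin, vmax]` whose net utility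
`U_net(G) = E[Ĝ(v)] − Ĝ(E[v])` is strictly greater than `c`
if and only if `c < E[max(0, v − E[v])]`. -/
theorem exists_truthful_cdf_iff
    {Ω : Type*} [MeasurableSpace Ω] (μ : Measure Ω) [IsProbabilityMeasure μ]
    (vmin vmax : ℝ) (h0 : 0 ≤ vmin) (h1 : vmin < vmax)
    (v : Ω → ℝ) (hv : ∀ ω, v ω ∈ Icc vmin vmax) (hmv : Measurable v)
    (c : ℝ) (hc : 0 ≤ c) :
    (∃ G : ℝ → ℝ, IsCdfOn vmin vmax G ∧
      c < (∫ ω, Ghat G (v ω) ∂μ) - Ghat G (∫ ω, v ω ∂μ))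
    ↔ c < ∫ ω, max 0 (v ω - ∫ ω', v ω' ∂μ) ∂μ := by
  set m : ℝ := ∫ ω', v ω' ∂μ with hmdef
  have hvint : Integrable v μ := by
    apply Integrable.mono' (integrable_const vmax) hmv.aestronglyMeasurable
    filter_upwards with ω
    rw [Real.norm_eq_abs, abs_of_nonneg (h0.trans (hv ω).1)]
    exact (hv ω).2
  have hm_ge : vmin ≤ m := by
    have := integral_mono (integrable_const vmin) hvint (fun ω => (hv ω).1)
    simpa using this
  have hm_le : m ≤ vmax := by
    have := integral_mono hvint (integrable_const vmax) (fun ω => (hv ω).2)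
    simpa using this
  have hm0 : 0 ≤ m := h0.trans hm_ge
  have hgint : Integrable (fun ω => max 0 (v ω - m)) μ := by
    apply Integrable.mono' (integrable_const (vmax + |m|))
      ((measurable_const.max (hmv.sub measurable_const)).aestronglyMeasurable)
    filter_upwards with ω
    rw [Real.norm_eq_abs, abs_of_nonneg (le_max_left _ _)]
    have h2 : v ω - m ≤ |v ω| + |m| := by
      have := abs_le.mp (le_refl |v ω|) -- dummy
      have h3 : v ω ≤ |v ω| := le_abs_self _
      have h4 : -m ≤ |m| := neg_le_abs m
      linarith
    have h5 : |v ω| ≤ vmax := by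
      rw [abs_of_nonneg (h0.trans (hv ω).1)]; exact (hv ω).2
    have h6 : (0:ℝ) ≤ vmax := h0.trans ((hv ω).1.trans (hv ω).2)
    have h7 : (0:ℝ) ≤ |m| := abs_nonneg m
    show max 0 (v ω - m) ≤ vmax + |m|
    rcases max_cases (0:ℝ) (v ω - m) with ⟨he, _⟩ | ⟨he, _⟩ <;> rw [he] <;> linarith
  constructor
  · rintro ⟨G, ⟨hGmono, hG01, _, _, _⟩, hlt⟩
    have hfint : Integrable (fun ω => Ghat G (v ω)) μ := by
      apply Integrable.mono' (integrable_const vmax)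
        (((Ghat_mono G hGmono hG01).measurable.comp hmv).aestronglyMeasurable)
      filter_upwards with ω
      have h2 : 0 ≤ Ghat G (v ω) := by
        have := Ghat_sub_eq G hGmono 0 (v ω)
        have h3 : (0:ℝ) ≤ ∫ r in (0:ℝ)..(v ω), G r :=
          intervalIntegral.integral_nonneg (h0.trans (hv ω).1) (fun r _ => (hG01 r).1)
        have h4 : Ghat G 0 = 0 := by simp [Ghat]
        linarith
      have h5 : Ghat G (v ω) ≤ v ω := by
        have := key_bound G hGmono hG01 0 (v ω)
        have h4 : Ghat G 0 = 0 := by simp [Ghat]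
        rw [h4, max_eq_right (by simpa using h0.trans (hv ω).1)] at this
        linarith
      simp only [Function.comp_apply, Real.norm_eq_abs]
      rw [abs_of_nonneg h2]
      exact h5.trans (hv ω).2
    have hsub : (∫ ω, Ghat G (v ω) ∂μ) - Ghat G m
        = ∫ ω, (Ghat G (v ω) - Ghat G m) ∂μ := by
      rw [integral_sub hfint (integrable_const _), integral_const]
      simp
    calc c < (∫ ω, Ghat G (v ω) ∂μ) - Ghat G m := hlt
      _ = ∫ ω, (Ghat G (v ω) - Ghat G m) ∂μ := hsub
      _ ≤ ∫ ω, max 0 (v ω - m) ∂μ := by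
          apply integral_mono (hfint.sub (integrable_const _)) hgint
          intro ω
          exact key_bound G hGmono hG01 m (v ω)
  · intro hlt
    refine ⟨fun r => if m ≤ r then (1:ℝ) else 0, ⟨?_, ?_, ?_, ?_, ?_⟩, ?_⟩
    · intro a b hab
      dsimp only
      split_ifs with ha hb <;> norm_num
      exact absurd (ha.trans hab) hb
    · intro r; dsimp only; split_ifs <;> norm_num
    · intro r
      rcases le_or_gt m r with h | h
      · apply ContinuousWithinAt.congr (continuousWithinAt_const (b := (1:ℝ)))
        · intro y hy; simp [h.trans hy]
        · simp [h]
      · apply ContinuousWithinAt.congr_of_eventuallyEq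
          (continuousWithinAt_const (b := (0:ℝ)))
        · apply mem_nhdsWithin_of_mem_nhds
          filter_upwards [Iio_mem_nhds h] with y hy
          simp [not_le.mpr (mem_Iio.mp hy)]
        · simp [not_le.mpr h]
    · intro r hr; simp [not_le.mpr (lt_of_lt_of_le hr hm_ge)]
    · intro r hr; simp [hm_le.trans hr]
    · have heq : ∀ ω, Ghat (fun r => if m ≤ r then (1:ℝ) else 0) (v ω)
          = max 0 (v ω - m) := fun ω => Ghat_step m hm0 (v ω) (h0.trans (hv ω).1)
      have hGm : Ghat (fun r => if m ≤ r then (1:ℝ) else 0) m = 0 := by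
        rw [Ghat_step m hm0 m hm0]; simp
      rw [hGm, sub_zero]
      calc c < ∫ ω, max 0 (v ω - m) ∂μ := hlt
        _ = ∫ ω, Ghat (fun r => if m ≤ r then (1:ℝ) else 0) (v ω) ∂μ := by
            apply integral_congr_ae; filter_upwards with ω; rw [heq ω]
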